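/- Let G be a finite DAG on vertex set V, let U = V \ sinks(G), and for X ⊆ U, i ∈ ℕ, t ∈ ℕ define f(i,t,X) to hold iff X is downward closed in U (X = pred[X] ∩ U, equivalently every non-sink predecessor of a member of X is in X) and there exists a feasible m-machine schedule with t timeslots processing exactly the jobs of X together with exactly i sinks of G. Then for t ≥ 1, f(i,t,X) holds if and only if X = pred[X] ∩ U and there exist j ∈ {0,…,m} and Y ⊆ X such that: Y is an antichain with |Y| ≤ m − j; the number of sinks all of whose predecessors lie in X \ Y is at least i; and f(i−j, t−1, X \ Y) holds. -/

import Mathlib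

/-- A feasible `m`-machine schedule of the job set `X`: a list of timeslots,
each of size at most `m`, pairwise disjoint, covering exactly `X`, such that
whenever `prec u v`, job `u` is scheduled in a strictly earlier timeslot. -/
def IsSchedule {V : Type*} (prec : V → V → Prop) (m : ℕ)
    (X : Finset V) (σ : List (Finset V)) : Prop :=
  (∀ T ∈ σ, T.card ≤ m) ∧
  (∀ v, v ∈ X ↔ ∃ i : Fin σ.length, v ∈ σ.get i) ∧
  (∀ i j : Fin σ.length, i ≠ j → Disjoint (σ.get i) (σ.get j)) ∧
  (∀ i j : Fin σ.length, ∀ u ∈ σ.get i, ∀ v ∈ σ.get j, prec u v → (i : ℕ) < (j : ℕ))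

/-- The sinks of the DAG, as a finset. -/
def sinksF {V : Type*} [Fintype V] [DecidableEq V]
    (prec : V → V → Prop) [DecidableRel prec] : Finset V :=
  Finset.univ.filter fun v => ∀ u, ¬ prec v u

/-- A feasible schedule of `X` that moreover schedules, for every scheduled
job, all of its predecessors (predecessor-closedness of the job set). -/
def IsSchedClosed {V : Type*} (prec : V → V → Prop) (m : ℕ)
    (X : Finset V) (σ : List (Finset V)) : Prop :=
  IsSchedule prec m X σ ∧ ∀ v ∈ X, ∀ u, prec u v → u ∈ X

/-- `fval prec m i t X` : `X` is downward closed among non-sinks and there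
is a feasible `m`-machine schedule with `t` timeslots processing exactly the
jobs of `X` together with exactly `i` sinks of `G`. -/
def fval {V : Type*} [Fintype V] [DecidableEq V]
    (prec : V → V → Prop) [DecidableRel prec] (m i t : ℕ) (X : Finset V) : Prop :=
  (∀ v ∈ X, ∀ u, prec u v → u ∉ sinksF prec → u ∈ X) ∧
  ∃ K ⊆ sinksF prec, K.card = i ∧
    ∃ σ : List (Finset V), IsSchedClosed prec m (X ∪ K) σ ∧ σ.length = t


set_option linter.unusedSectionVars false
set_option linter.unusedVariables false
set_option linter.unnecessarySimpa false

section
variable {V : Type*} [DecidableEq V] {prec : V → V → Prop} {m : ℕ}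


lemma get_concat (σ' : List (Finset V)) (T : Finset V) (i : Fin (σ' ++ [T]).length) :
    (σ' ++ [T]).get i = if h : (i : ℕ) < σ'.length then σ'.get ⟨i, h⟩ else T := by
  rcases lt_or_ge (i : ℕ) σ'.length with h | h
  · rw [dif_pos h]
    simp [List.get_eq_getElem, List.getElem_append_left h]
  · have hi : (i : ℕ) = σ'.length := by
      have := i.isLt; simp at this; omega
    rw [dif_neg (not_lt.mpr h)]
    simp only [List.get_eq_getElem]
    exact List.getElem_concat_length hi _

lemma isSchedule_concat {S T : Finset V} {σ' : List (Finset V)}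
    (h : IsSchedule prec m S σ') (hT : T.card ≤ m) (hd : Disjoint T S)
    (hlast : ∀ u ∈ T, ∀ v ∈ S ∪ T, ¬ prec u v) :
    IsSchedule prec m (S ∪ T) (σ' ++ [T]) := by
  obtain ⟨hc, hmem, hdisj, hprec⟩ := h
  have hsub : ∀ i : Fin σ'.length, σ'.get i ⊆ S := fun i v hv =>
    (hmem v).2 ⟨i, hv⟩
  refine ⟨?_, ?_, ?_, ?_⟩
  · intro T' hT'
    rcases List.mem_append.1 hT' with h' | h'
    · exact hc _ h'
    · simp at h'; subst h'; exact hT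
  · intro v
    constructor
    · intro hv
      rcases Finset.mem_union.1 hv with hv | hv
      · obtain ⟨i, hi⟩ := (hmem v).1 hv
        refine ⟨⟨i, by simp⟩, ?_⟩
        rw [get_concat]; simp [i.isLt]; exact hi
      · refine ⟨⟨σ'.length, by simp⟩, ?_⟩
        rw [get_concat]; simp; exact hv
    · rintro ⟨i, hi⟩
      rw [get_concat] at hi
      split at hi
      · exact Finset.mem_union_left _ (hsub _ hi)
      · exact Finset.mem_union_right _ hi
  · intro i j hij
    rw [get_concat, get_concat]
    split <;> split
    · refine hdisj _ _ (fun h' => hij ?_)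
      have h2 : (i : ℕ) = j := by simpa using h'
      exact Fin.ext h2
    · exact (hd.mono_right (hsub _)).symm
    · exact hd.mono_right (hsub _)
    · exfalso; apply hij; apply Fin.ext
      have := i.isLt; have := j.isLt; simp at *; omega
  · intro i j u hu v hv huv
    rw [get_concat] at hu hv
    split at hu <;> split at hv
    · exact hprec _ _ _ hu _ hv huv
    · have := i.isLt; have := j.isLt; simp at *; omega
    · exact absurd huv (hlast u hu v (Finset.mem_union_left _ (hsub _ hv)))
    · exact absurd huv (hlast u hu v (Finset.mem_union_right _ hv))

lemma isSchedule_drop {S T : Finset V} {σ' : List (Finset V)}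
    (h : IsSchedule prec m S (σ' ++ [T])) :
    IsSchedule prec m (S \ T) σ' ∧ T ⊆ S ∧ T.card ≤ m ∧
      (∀ u ∈ T, ∀ v ∈ S, ¬ prec u v) := by
  obtain ⟨hc, hmem, hdisj, hprec⟩ := h
  have hlastget : (σ' ++ [T]).get ⟨σ'.length, by simp⟩ = T := by
    rw [get_concat]; simp
  have hTS : T ⊆ S := by
    intro v hv
    exact (hmem v).2 ⟨⟨σ'.length, by simp⟩, by rw [hlastget]; exact hv⟩
  have hcastlt : σ'.length ≤ (σ' ++ [T]).length := by simp
  have hget : ∀ i : Fin σ'.length, (σ' ++ [T]).get (Fin.castLE hcastlt i) = σ'.get i := by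
    intro i; rw [get_concat]
    rw [dif_pos (by simpa using i.isLt)]; rfl
  have hnolast : ∀ u ∈ T, ∀ v ∈ S, ¬ prec u v := by
    intro u hu v hv huv
    obtain ⟨j, hj⟩ := (hmem v).1 hv
    have h1 := hprec ⟨σ'.length, by simp⟩ j u (by rw [hlastget]; exact hu) v hj huv
    have h2 := j.isLt
    simp at h1 h2; omega
  refine ⟨⟨?_, ?_, ?_, ?_⟩, hTS, hc T (by simp), hnolast⟩
  · intro T' hT'; exact hc _ (List.mem_append_left _ hT')
  · intro v
    constructor
    · intro hv
      obtain ⟨hvS, hvT⟩ := Finset.mem_sdiff.1 hv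
      obtain ⟨j, hj⟩ := (hmem v).1 hvS
      rcases lt_or_ge (j : ℕ) σ'.length with h' | h'
      · refine ⟨⟨j, h'⟩, ?_⟩
        rw [get_concat] at hj; simpa [h'] using hj
      · exfalso
        rw [get_concat, dif_neg (by omega)] at hj
        exact hvT hj
    · rintro ⟨i, hi⟩
      have hvS : v ∈ S := (hmem v).2 ⟨Fin.castLE hcastlt i, by rw [hget]; exact hi⟩
      refine Finset.mem_sdiff.2 ⟨hvS, fun hvT => ?_⟩
      have hne : Fin.castLE hcastlt i ≠ ⟨σ'.length, by simp⟩ := by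
        intro h'
        have : (i : ℕ) = σ'.length := congrArg Fin.val h'
        have := i.isLt; omega
      exact Finset.disjoint_left.1 (hdisj _ _ hne)
        (by rw [hget]; exact hi) (by rw [hlastget]; exact hvT)
  · intro i j hij
    have hne : Fin.castLE hcastlt i ≠ Fin.castLE hcastlt j := by
      intro h'; exact hij (Fin.castLE_inj.1 h')
    have := hdisj _ _ hne
    rwa [hget, hget] at this
  · intro i j u hu v hv huv
    have := hprec (Fin.castLE hcastlt i) (Fin.castLE hcastlt j) u
      (by rw [hget]; exact hu) v (by rw [hget]; exact hv) huv
    simpa using this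

end

/-- The recurrence of the `O*(2^{n-|sinks|})` algorithm: for `t ≥ 1`,
`f(i,t,X)` holds iff `X` is downward closed in `U` and there are `j ≤ m` and
`Y ⊆ X` such that `Y` is an antichain with `|Y| ≤ m − j`, at least `i` sinks
have all their predecessors in `X \ Y`, and `f(i−j, t−1, X \ Y)` holds. -/
theorem stmt11 {V : Type*} [Fintype V] [DecidableEq V]
    (prec : V → V → Prop) [DecidableRel prec]
    (htrans : Transitive prec) (hirr : Irreflexive prec)
    (m i t : ℕ) (ht : 1 ≤ t) (X : Finset V)
    (hXU : ∀ v ∈ X, v ∉ sinksF prec) :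
    fval prec m i t X ↔
      ((∀ v ∈ X, ∀ u, prec u v → u ∉ sinksF prec → u ∈ X) ∧
       ∃ j ≤ m, ∃ Y ⊆ X, (∀ a ∈ Y, ∀ b ∈ Y, ¬ prec a b) ∧ Y.card ≤ m - j ∧
         i ≤ ((sinksF prec).filter fun s => ∀ u, prec u s → u ∈ X \ Y).card ∧
         fval prec m (i - j) (t - 1) (X \ Y)) := by
  have hsinkpred : ∀ u v : V, prec u v → u ∉ sinksF prec := by
    intro u v huv hu
    simp only [sinksF, Finset.mem_filter] at hu
    exact hu.2 v huv
  have hsinkmem : ∀ u v : V, u ∈ sinksF prec → ¬ prec u v := by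
    intro u v hu
    simp only [sinksF, Finset.mem_filter] at hu
    exact hu.2 v
  constructor
  · rintro ⟨hclosed, K, hK, hKcard, σ, ⟨hsched, hclos⟩, hlen⟩
    refine ⟨hclosed, ?_⟩
    have hne : σ ≠ [] := by
      intro h; rw [h] at hlen; simp at hlen; omega
    obtain ⟨σ', T, hσ⟩ : ∃ σ' T, σ = σ' ++ [T] :=
      ⟨σ.dropLast, σ.getLast hne, (List.dropLast_append_getLast hne).symm⟩
    subst hσ
    obtain ⟨h1, h2, h3, h4⟩ := isSchedule_drop hsched
    have hXK : ∀ v, v ∈ X → v ∉ K := fun v hv hvK => hXU v hv (hK hvK)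
    set Y := T ∩ X with hY
    set J := T ∩ K with hJdef
    have hTYJ : T = Y ∪ J := by
      ext v
      simp only [hY, hJdef, Finset.mem_union, Finset.mem_inter]
      constructor
      · intro hv
        rcases Finset.mem_union.1 (h2 hv) with h | h
        · exact Or.inl ⟨hv, h⟩
        · exact Or.inr ⟨hv, h⟩
      · rintro (⟨h, _⟩ | ⟨h, _⟩) <;> exact h
    have hYJdisj : Disjoint Y J := by
      rw [Finset.disjoint_left]
      intro a haY haJ
      exact hXK a (Finset.mem_inter.1 haY).2 (Finset.mem_inter.1 haJ).2
    have hcards : Y.card + J.card = T.card := by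
      rw [hTYJ]; exact (Finset.card_union_of_disjoint hYJdisj).symm
    have hJm : J.card ≤ m := le_trans (Finset.card_le_card Finset.inter_subset_left) h3
    have hKsub : K ⊆ (sinksF prec).filter fun s => ∀ u, prec u s → u ∈ X \ Y := by
      intro s hs
      refine Finset.mem_filter.2 ⟨hK hs, fun u hu => ?_⟩
      have huXK : u ∈ X ∪ K := hclos s (Finset.mem_union_right _ hs) u hu
      have huns : u ∉ sinksF prec := hsinkpred u s hu
      have huX : u ∈ X := by
        rcases Finset.mem_union.1 huXK with h | h
        · exact h
        · exact absurd (hK h) huns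
      refine Finset.mem_sdiff.2 ⟨huX, fun huY => ?_⟩
      exact h4 u (Finset.mem_inter.1 huY).1 s (Finset.mem_union_right _ hs) hu
    have hseteq : X \ Y ∪ K \ T = (X ∪ K) \ T := by
      ext v
      simp only [Finset.mem_union, Finset.mem_sdiff, hY, Finset.mem_inter]
      have := hXK v
      tauto
    refine ⟨J.card, hJm, Y, Finset.inter_subset_right, ?_, by omega, ?_, ?_, K \ T, ?_, ?_, σ', ⟨?_, ?_⟩, ?_⟩
    · intro a ha b hb
      exact h4 a (Finset.mem_inter.1 ha).1 b
        (Finset.mem_union_left _ (Finset.mem_inter.1 hb).2)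
    · calc i = K.card := hKcard.symm
        _ ≤ _ := Finset.card_le_card hKsub
    · intro v hv u hu hns
      obtain ⟨hvX, hvY⟩ := Finset.mem_sdiff.1 hv
      have huX : u ∈ X := hclosed v hvX u hu hns
      refine Finset.mem_sdiff.2 ⟨huX, fun huY => ?_⟩
      exact h4 u (Finset.mem_inter.1 huY).1 v (Finset.mem_union_left _ hvX) hu
    · exact le_trans Finset.sdiff_subset hK
    · have := Finset.card_sdiff_add_card_inter K T
      have hJc : (K ∩ T).card = J.card := by rw [hJdef, Finset.inter_comm]
      omega
    · rw [hseteq]; exact h1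
    · rw [hseteq]
      intro v hv u hu
      obtain ⟨hvXK, hvT⟩ := Finset.mem_sdiff.1 hv
      have huXK : u ∈ X ∪ K := hclos v hvXK u hu
      refine Finset.mem_sdiff.2 ⟨huXK, fun huT => ?_⟩
      exact h4 u huT v hvXK hu
    · simp at hlen ⊢; omega
  · rintro ⟨hclosed, j, hjm, Y, hYX, hanti, hYcard, hsinks, hfc, K', hK', hK'card, σ', ⟨hs', hc'⟩, hlen'⟩
    refine ⟨hclosed, ?_⟩
    set F := (sinksF prec).filter fun s => ∀ u, prec u s → u ∈ X \ Y with hF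
    have hK'F : K' ⊆ F := by
      intro s hs
      refine Finset.mem_filter.2 ⟨hK' hs, fun u hu => ?_⟩
      have huXK : u ∈ (X \ Y) ∪ K' := hc' s (Finset.mem_union_right _ hs) u hu
      rcases Finset.mem_union.1 huXK with h | h
      · exact h
      · exact absurd (hK' h) (hsinkpred u s hu)
    have hFK'card : i - (i - j) ≤ (F \ K').card := by
      rw [Finset.card_sdiff_of_subset hK'F]
      omega
    obtain ⟨J, hJF, hJcard⟩ := Finset.exists_subset_card_eq hFK'card
    have hJsinks : J ⊆ sinksF prec := fun a ha =>
      (Finset.mem_filter.1 (Finset.sdiff_subset (hJF ha))).1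
    have hJK' : Disjoint J K' := by
      rw [Finset.disjoint_left]
      intro a ha haK'
      exact (Finset.mem_sdiff.1 (hJF ha)).2 haK'
    have hKsinks : K' ∪ J ⊆ sinksF prec := Finset.union_subset hK' hJsinks
    have hKcard : (K' ∪ J).card = i := by
      rw [Finset.card_union_of_disjoint hJK'.symm]
      omega
    have hYnonsink : ∀ a ∈ Y, a ∉ sinksF prec := fun a ha => hXU a (hYX ha)
    have hTd : Disjoint (Y ∪ J) (X \ Y ∪ K') := by
      rw [Finset.disjoint_left]
      intro a ha haS
      rcases Finset.mem_union.1 ha with h | h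
      · rcases Finset.mem_union.1 haS with h' | h'
        · exact (Finset.mem_sdiff.1 h').2 h
        · exact hYnonsink a h (hK' h')
      · rcases Finset.mem_union.1 haS with h' | h'
        · exact hXU a (Finset.mem_sdiff.1 h').1 (hJsinks h)
        · exact Finset.disjoint_left.1 hJK' h h'
    have hTcard : (Y ∪ J).card ≤ m := by
      calc (Y ∪ J).card ≤ Y.card + J.card := Finset.card_union_le _ _
        _ ≤ (m - j) + (i - (i - j)) := by omega
        _ ≤ m := by omega
    have hFpred : ∀ s ∈ F, ∀ u, prec u s → u ∈ X \ Y := fun s hs =>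
      (Finset.mem_filter.1 hs).2
    have hlast : ∀ u ∈ Y ∪ J, ∀ v ∈ (X \ Y ∪ K') ∪ (Y ∪ J), ¬ prec u v := by
      intro u hu v hv huv
      rcases Finset.mem_union.1 hu with huY | huJ
      · have huXY : u ∉ X \ Y := fun h => (Finset.mem_sdiff.1 h).2 huY
        rcases Finset.mem_union.1 hv with h | h
        · rcases Finset.mem_union.1 h with h' | h'
          · exact huXY (hfc v h' u huv (hYnonsink u huY))
          · exact huXY (hFpred v (hK'F h') u huv)
        · rcases Finset.mem_union.1 h with h' | h'
          · exact hanti u huY v h' huv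
          · exact huXY (hFpred v (Finset.sdiff_subset (hJF h')) u huv)
      · exact hsinkmem u v (hJsinks huJ) huv
    have hS := isSchedule_concat hs' hTcard hTd hlast
    have hseteq : (X \ Y ∪ K') ∪ (Y ∪ J) = X ∪ (K' ∪ J) := by
      ext v
      simp only [Finset.mem_union, Finset.mem_sdiff]
      have := @hYX v
      tauto
    rw [hseteq] at hS
    refine ⟨K' ∪ J, hKsinks, hKcard, σ' ++ [Y ∪ J], ⟨hS, ?_⟩, by simp; omega⟩
    intro v hv u hu
    rcases Finset.mem_union.1 hv with h | h
    · exact Finset.mem_union_left _ (hclosed v h u hu (hsinkpred u v hu))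
    · refine Finset.mem_union_left _ ?_
      rcases Finset.mem_union.1 h with h' | h'
      · exact (Finset.mem_sdiff.1 (hFpred v (hK'F h') u hu)).1
      · exact (Finset.mem_sdiff.1 (hFpred v (Finset.sdiff_subset (hJF h')) u hu)).1
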